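/- For s ∈ (0,1), the Petz Rényi relative entropy of coherence is additive: D_{s,C}(ρ^{⊗n}) = n · D_{s,C}(ρ), where D_{s,C}(ρ) := inf_{σ∈C} D_s(ρ‖σ) and C is the set of density matrices diagonal in a fixed basis (with the incoherent set on the n-fold space being states diagonal in the corresponding product basis). -/

import Mathlib

noncomputable section
open scoped BigOperators ComplexOrder

variable {n : Type*} [Fintype n] [DecidableEq n]

/-- A density matrix: positive semidefinite with trace one. -/
def IsDensity (ρ : Matrix n n ℂ) : Prop := ρ.PosSemidef ∧ ρ.trace = 1

/-- Apply a real function to a Hermitian matrix via the functional calculus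
(junk value `0` if the matrix is not Hermitian). -/
noncomputable def matFun (A : Matrix n n ℂ) (f : ℝ → ℝ) : Matrix n n ℂ :=
  if h : A.IsHermitian then h.cfc f else 0

/-- Fractional matrix power `X^s` via functional calculus (on the support; `0^s = 0`). -/
noncomputable def mpow (A : Matrix n n ℂ) (s : ℝ) : Matrix n n ℂ :=
  matFun A (fun x => x ^ s)

/-- Petz divergence `D_s(ρ‖σ) = (1/(s-1)) log tr[ρ^s σ^{1-s}]`. -/
noncomputable def petzD (s : ℝ) (ρ σ : Matrix n n ℂ) : ℝ :=
  (1 / (s - 1)) * Real.log (((mpow ρ s * mpow σ (1 - s)).trace).re)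

/-- Incoherent states: diagonal in the fixed (product) basis. -/
def IsIncoherent (σ : Matrix n n ℂ) : Prop := ∀ i j, i ≠ j → σ i j = 0

/-- Petz Rényi relative entropy of coherence `D_{s,C}(ρ) = inf_{σ ∈ C} D_s(ρ‖σ)`. -/
noncomputable def petzCoherence (s : ℝ) (ρ : Matrix n n ℂ) : ℝ :=
  ⨅ σ : {σ : Matrix n n ℂ // IsDensity σ ∧ IsIncoherent σ}, petzD s ρ σ.1

/-- `k`-fold tensor (Kronecker) power of a matrix. -/
noncomputable def tpow {d : ℕ} (ρ : Matrix (Fin d) (Fin d) ℂ) (k : ℕ) :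
    Matrix (Fin k → Fin d) (Fin k → Fin d) ℂ :=
  Matrix.of fun x y => ∏ i, ρ (x i) (y i)


section Aux
open Matrix Polynomial
variable {m : Type*} [Fintype m] [DecidableEq m]

/-- Conjugation by an invertible element as an `ℝ`-algebra hom on complex matrices. -/
noncomputable def conjAH (V W : Matrix m m ℂ) (hVW : V * W = 1) (hWV : W * V = 1) :
    Matrix m m ℂ →ₐ[ℝ] Matrix m m ℂ where
  toFun X := V * X * W
  map_one' := by show V * 1 * W = 1; rw [mul_one, hVW]
  map_mul' X Y := by
    show V * (X * Y) * W = V * X * W * (V * Y * W)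
    have : V * X * W * (V * Y * W) = V * (X * (W * V) * Y) * W := by
      simp only [Matrix.mul_assoc]
    rw [this, hWV, mul_one, Matrix.mul_assoc]
  map_zero' := by show V * 0 * W = 0; simp
  map_add' X Y := by
    show V * (X + Y) * W = V * X * W + V * Y * W
    rw [Matrix.mul_add, Matrix.add_mul]
  commutes' r := by
    show V * algebraMap ℝ (Matrix m m ℂ) r * W = _
    rw [Algebra.algebraMap_eq_smul_one, Matrix.mul_smul, mul_one, Matrix.smul_mul, hVW]

lemma conjAH_apply (V W : Matrix m m ℂ) (h1 h2) (X : Matrix m m ℂ) :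
    conjAH V W h1 h2 X = V * X * W := rfl

/-- Functional calculus on a unitary conjugation of a real diagonal matrix. -/
lemma matFun_unitary_diag (V : Matrix m m ℂ) (hV : V * Vᴴ = 1) (hV' : Vᴴ * V = 1)
    (μ : m → ℝ) (f : ℝ → ℝ) (hherm : (V * diagonal (fun i => (μ i : ℂ)) * Vᴴ).IsHermitian) :
    hherm.cfc f = V * diagonal (fun i => ((f (μ i) : ℝ) : ℂ)) * Vᴴ := by
  classical
  set S : Finset ℝ := Finset.image μ Finset.univ ∪ Finset.image hherm.eigenvalues Finset.univ
    with hS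
  set p : ℝ[X] := Lagrange.interpolate S id f with hp
  have hpval : ∀ x ∈ S, p.eval x = f x := by
    intro x hx
    exact Lagrange.eval_interpolate_at_node f (Set.injOn_id _) hx
  have key : ∀ (W : Matrix m m ℂ), W * Wᴴ = 1 → Wᴴ * W = 1 → ∀ ν : m → ℝ,
      Polynomial.aeval (W * diagonal (fun i => (ν i : ℂ)) * Wᴴ) p
        = W * diagonal (fun i => ((p.eval (ν i) : ℝ) : ℂ)) * Wᴴ := by
    intro W hW hW' ν
    have h1 : W * diagonal (fun i => (ν i : ℂ)) * Wᴴ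
        = conjAH W Wᴴ hW hW'
            (diagonalAlgHom (R := ℝ) (n := m) (α := ℂ) (fun i => (ν i : ℂ))) := rfl
    rw [h1, Polynomial.aeval_algHom_apply, Polynomial.aeval_algHom_apply, conjAH_apply]
    have h4 : (diagonalAlgHom (R := ℝ) (n := m) (α := ℂ))
          (Polynomial.aeval (fun i => (ν i : ℂ)) p)
        = diagonal (fun i => ((p.eval (ν i) : ℝ) : ℂ)) := by
      show diagonal _ = diagonal _
      rw [diagonal_eq_diagonal_iff]
      intro i
      have h2 : (Polynomial.aeval (fun i => (ν i : ℂ))) p i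
          = Polynomial.aeval ((ν i : ℂ)) p :=
        (Polynomial.aeval_algHom_apply (Pi.evalAlgHom ℝ (fun _ => ℂ) i) _ p).symm
      have h3 : ((ν i : ℂ)) = algebraMap ℝ ℂ (ν i) := rfl
      rw [h2, h3, Polynomial.aeval_algebraMap_apply_eq_algebraMap_eval]
      simp [Polynomial.coe_aeval_eq_eval]
    rw [h4]
  have hU : (hherm.eigenvectorUnitary : Matrix m m ℂ)
      * (hherm.eigenvectorUnitary : Matrix m m ℂ)ᴴ = 1 := by
    exact Matrix.mem_unitaryGroup_iff.mp hherm.eigenvectorUnitary.2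
  have hU' : (hherm.eigenvectorUnitary : Matrix m m ℂ)ᴴ
      * (hherm.eigenvectorUnitary : Matrix m m ℂ) = 1 := by
    exact Matrix.mem_unitaryGroup_iff'.mp hherm.eigenvectorUnitary.2
  have hspec : V * diagonal (fun i => (μ i : ℂ)) * Vᴴ = (hherm.eigenvectorUnitary : Matrix m m ℂ)
      * diagonal (fun i => ((hherm.eigenvalues i : ℝ) : ℂ))
      * (hherm.eigenvectorUnitary : Matrix m m ℂ)ᴴ := by
    conv_lhs => rw [hherm.spectral_theorem]
    rfl
  have e1 : Polynomial.aeval (V * diagonal (fun i => (μ i : ℂ)) * Vᴴ) p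
      = (hherm.eigenvectorUnitary : Matrix m m ℂ)
        * diagonal (fun i => ((f (hherm.eigenvalues i) : ℝ) : ℂ))
        * (hherm.eigenvectorUnitary : Matrix m m ℂ)ᴴ := by
    conv_lhs => rw [hspec]
    rw [key _ hU hU' _]
    have : diagonal (fun i => ((p.eval (hherm.eigenvalues i) : ℝ) : ℂ))
        = diagonal (fun i => ((f (hherm.eigenvalues i) : ℝ) : ℂ)) := by
      rw [diagonal_eq_diagonal_iff]
      intro i
      rw [hpval _ (Finset.mem_union_right _ (Finset.mem_image_of_mem _ (Finset.mem_univ i)))]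
    rw [this]
  have e2 : Polynomial.aeval (V * diagonal (fun i => (μ i : ℂ)) * Vᴴ) p
      = V * diagonal (fun i => ((f (μ i) : ℝ) : ℂ)) * Vᴴ := by
    rw [key _ hV hV' _]
    have : diagonal (fun i => ((p.eval (μ i) : ℝ) : ℂ))
        = diagonal (fun i => ((f (μ i) : ℝ) : ℂ)) := by
      rw [diagonal_eq_diagonal_iff]
      intro i
      rw [hpval _ (Finset.mem_union_left _ (Finset.mem_image_of_mem _ (Finset.mem_univ i)))]
    rw [this]
  calc hherm.cfc f
      = (hherm.eigenvectorUnitary : Matrix m m ℂ)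
        * diagonal (fun i => ((f (hherm.eigenvalues i) : ℝ) : ℂ))
        * (hherm.eigenvectorUnitary : Matrix m m ℂ)ᴴ := rfl
    _ = Polynomial.aeval (V * diagonal (fun i => (μ i : ℂ)) * Vᴴ) p := e1.symm
    _ = _ := e2


lemma isHermitian_conj_diag (V : Matrix m m ℂ) (μ : m → ℝ) :
    (V * diagonal (fun i => (μ i : ℂ)) * Vᴴ).IsHermitian := by
  apply Matrix.isHermitian_mul_mul_conjTranspose
  refine Matrix.isHermitian_diagonal_iff.mpr fun i => ?_
  simp [_root_.IsSelfAdjoint, Complex.star_def, Complex.conj_ofReal]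

lemma matFun_conj_diag (V : Matrix m m ℂ) (hV : V * Vᴴ = 1) (hV' : Vᴴ * V = 1)
    (μ : m → ℝ) (f : ℝ → ℝ) :
    matFun (V * diagonal (fun i => (μ i : ℂ)) * Vᴴ) f
      = V * diagonal (fun i => ((f (μ i) : ℝ) : ℂ)) * Vᴴ := by
  rw [matFun, dif_pos (isHermitian_conj_diag V μ)]
  exact matFun_unitary_diag V hV hV' μ f _

lemma matFun_diagonal (v : m → ℝ) (f : ℝ → ℝ) :
    matFun (diagonal (fun i => (v i : ℂ))) f = diagonal (fun i => ((f (v i) : ℝ) : ℂ)) := by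
  have h := matFun_conj_diag (1 : Matrix m m ℂ) (by simp) (by simp) v f
  simpa using h

lemma conj_diag_apply_same (V : Matrix m m ℂ) (c : m → ℂ) (i : m) :
    (V * diagonal c * Vᴴ) i i = ∑ j, c j * (Complex.normSq (V i j) : ℂ) := by
  rw [Matrix.mul_apply]
  refine Finset.sum_congr rfl fun j _ => ?_
  rw [Matrix.mul_diagonal, Matrix.conjTranspose_apply, mul_comm (V i j) (c j), mul_assoc,
    Complex.star_def, Complex.mul_conj]

lemma sum_conj_diag_apply_same (V : Matrix m m ℂ) (hV' : Vᴴ * V = 1) (c : m → ℂ) :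
    ∑ i, (V * diagonal c * Vᴴ) i i = ∑ j, c j := by
  simp_rw [conj_diag_apply_same]
  rw [Finset.sum_comm]
  refine Finset.sum_congr rfl fun j _ => ?_
  rw [← Finset.mul_sum]
  have h : ∑ i, (Complex.normSq (V i j) : ℂ) = 1 := by
    have h1 := congrFun (congrFun hV' j) j
    rw [Matrix.mul_apply, Matrix.one_apply_eq] at h1
    rw [← h1]
    refine Finset.sum_congr rfl fun i _ => ?_
    rw [Matrix.conjTranspose_apply, mul_comm, Complex.star_def, Complex.mul_conj]
  rw [h, mul_one]

lemma posSemidef_decomp (ρ : Matrix m m ℂ) (h : ρ.PosSemidef) :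
    ∃ (U : Matrix m m ℂ) (ν : m → ℝ), U * Uᴴ = 1 ∧ Uᴴ * U = 1 ∧ (∀ i, 0 ≤ ν i) ∧
      ρ = U * diagonal (fun i => (ν i : ℂ)) * Uᴴ := by
  refine ⟨h.1.eigenvectorUnitary, h.1.eigenvalues,
    Matrix.mem_unitaryGroup_iff.mp h.1.eigenvectorUnitary.2,
    Matrix.mem_unitaryGroup_iff'.mp h.1.eigenvectorUnitary.2,
    h.eigenvalues_nonneg, ?_⟩
  conv_lhs => rw [h.1.spectral_theorem]
  rfl

lemma incoherent_density_char (σ : Matrix m m ℂ) (h : IsDensity σ ∧ IsIncoherent σ) :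
    σ = diagonal (fun i => (((σ i i).re : ℝ) : ℂ)) ∧ (∀ i, 0 ≤ (σ i i).re) ∧
      (∑ i, (σ i i).re) = 1 := by
  have hherm : σᴴ = σ := h.1.1.1
  have hreal : ∀ i, ((σ i i).re : ℂ) = σ i i := by
    intro i
    have h1 := congrFun (congrFun hherm i) i
    rw [Matrix.conjTranspose_apply, Complex.star_def] at h1
    exact Complex.conj_eq_iff_re.mp h1
  refine ⟨?_, ?_, ?_⟩
  · ext i j
    by_cases hij : i = j
    · subst hij; rw [Matrix.diagonal_apply_eq, hreal]
    · rw [Matrix.diagonal_apply_ne _ hij]; exact h.2 i j hij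
  · intro i
    have h2 : 0 ≤ σ i i := h.1.1.diag_nonneg
    rw [← hreal i] at h2
    exact Complex.zero_le_real.mp h2
  · have h4 : σ.trace = ((∑ i, (σ i i).re : ℝ) : ℂ) := by
      rw [Matrix.trace]
      push_cast
      exact Finset.sum_congr rfl fun i _ => (hreal i).symm
    rw [h.1.2] at h4
    exact_mod_cast h4.symm

lemma petzD_diag (s : ℝ) (ρ : Matrix m m ℂ) (a q : m → ℝ)
    (ha : ∀ i, (mpow ρ s) i i = ((a i : ℝ) : ℂ)) :
    petzD s ρ (diagonal (fun i => (q i : ℂ)))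
      = (1 / (s - 1)) * Real.log (∑ i, a i * q i ^ (1 - s)) := by
  rw [petzD]
  rw [show mpow (diagonal fun i => ((q i : ℝ) : ℂ)) (1 - s)
      = diagonal (fun i => ((q i ^ (1 - s) : ℝ) : ℂ)) from matFun_diagonal q _]
  have h : (mpow ρ s * diagonal (fun i => ((q i ^ (1 - s) : ℝ) : ℂ))).trace
      = ((∑ i, a i * q i ^ (1 - s) : ℝ) : ℂ) := by
    rw [Matrix.trace]
    push_cast
    refine Finset.sum_congr rfl fun i _ => ?_
    rw [Matrix.diag_apply, Matrix.mul_diagonal, ha i]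
  rw [h, Complex.ofReal_re]

lemma holder_bound (a q : m → ℝ) (ha : ∀ i, 0 ≤ a i) (hq : ∀ i, 0 ≤ q i)
    (hq1 : ∑ i, q i = 1) {s : ℝ} (hs0 : 0 < s) (hs1 : s < 1)
    (hT : 0 < ∑ i, a i ^ (1 / s)) :
    ∑ i, a i * q i ^ (1 - s) ≤ (∑ i, a i ^ (1 / s)) ^ s := by
  set T := ∑ i, a i ^ (1 / s) with hTdef
  have hTs : (0 : ℝ) < T ^ s := Real.rpow_pos_of_pos hT s
  have step : ∀ i, a i * q i ^ (1 - s) ≤ T ^ s * (s * (a i ^ (1 / s) / T) + (1 - s) * q i) := by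
    intro i
    have hy := Real.geom_mean_le_arith_mean2_weighted (w₁ := s) (w₂ := 1 - s)
      (p₁ := a i ^ (1 / s) / T) (p₂ := q i) hs0.le (by linarith)
      (div_nonneg (Real.rpow_nonneg (ha i) _) hT.le) (hq i) (by ring)
    have hl : (a i ^ (1 / s) / T) ^ s = a i / T ^ s := by
      rw [Real.div_rpow (Real.rpow_nonneg (ha i) _) hT.le]
      rw [← Real.rpow_mul (ha i), one_div, inv_mul_cancel₀ hs0.ne', Real.rpow_one]
    have h2 : a i * q i ^ (1 - s) = T ^ s * ((a i / T ^ s) * q i ^ (1 - s)) := by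
      field_simp
    rw [h2]
    apply mul_le_mul_of_nonneg_left _ hTs.le
    rw [← hl]
    exact hy
  calc ∑ i, a i * q i ^ (1 - s)
      ≤ ∑ i, T ^ s * (s * (a i ^ (1 / s) / T) + (1 - s) * q i) :=
        Finset.sum_le_sum fun i _ => step i
    _ = T ^ s := by
        rw [← Finset.mul_sum]
        have h3 : ∑ i, (s * (a i ^ (1 / s) / T) + (1 - s) * q i)
            = s * (T / T) + (1 - s) * 1 := by
          rw [Finset.sum_add_distrib, ← Finset.mul_sum, ← Finset.mul_sum, ← Finset.sum_div, hq1]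
        rw [h3, div_self hT.ne', mul_one, mul_one]
        ring

lemma holder_eq (a : m → ℝ) (ha : ∀ i, 0 ≤ a i) {s : ℝ} (hs0 : 0 < s) (hs1 : s < 1)
    (hT : 0 < ∑ i, a i ^ (1 / s)) :
    ∑ i, a i * (a i ^ (1 / s) / (∑ j, a j ^ (1 / s))) ^ (1 - s)
      = (∑ i, a i ^ (1 / s)) ^ s := by
  set T := ∑ j, a j ^ (1 / s) with hTdef
  have hterm : ∀ i, a i * (a i ^ (1 / s) / T) ^ (1 - s) = a i ^ (1 / s) / T ^ (1 - s) := by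
    intro i
    rw [Real.div_rpow (Real.rpow_nonneg (ha i) _) hT.le, ← Real.rpow_mul (ha i)]
    rw [mul_div_assoc']
    congr 1
    have h1 : a i * a i ^ (1 / s * (1 - s)) = a i ^ (1 + 1 / s * (1 - s)) := by
      rw [Real.rpow_add' (ha i) (ne_of_gt (by
        have h2 : 0 < 1 / s * (1 - s) := mul_pos (by positivity) (by linarith)
        linarith)), Real.rpow_one]
    rw [h1]
    congr 1
    field_simp
    ring
  rw [Finset.sum_congr rfl fun i _ => hterm i, ← Finset.sum_div, ← hTdef]
  rw [show T / T ^ (1 - s) = T ^ (1 : ℝ) / T ^ (1 - s) by rw [Real.rpow_one],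
    ← Real.rpow_sub hT]
  norm_num


open scoped Classical in
lemma petzCoherence_formula (ρ : Matrix m m ℂ) (hρ : IsDensity ρ) {s : ℝ}
    (hs0 : 0 < s) (hs1 : s < 1) :
    petzCoherence s ρ =
      if ∃ i, ((mpow ρ s) i i).re = 0 then
        min ((s / (s - 1)) * Real.log (∑ i, ((mpow ρ s) i i).re ^ (1 / s))) 0
      else (s / (s - 1)) * Real.log (∑ i, ((mpow ρ s) i i).re ^ (1 / s)) := by
  obtain ⟨hpsd, htr⟩ := hρ
  obtain ⟨U, ν, hU, hU', hν0, hspec⟩ := posSemidef_decomp ρ hpsd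
  set a : m → ℝ := fun i => ((mpow ρ s) i i).re with haDef
  have hmpow : mpow ρ s = U * diagonal (fun i => ((ν i ^ s : ℝ) : ℂ)) * Uᴴ := by
    rw [mpow, hspec]
    exact matFun_conj_diag U hU hU' ν _
  have hentry : ∀ i, (mpow ρ s) i i
      = ((∑ j, ν j ^ s * Complex.normSq (U i j) : ℝ) : ℂ) := by
    intro i
    rw [hmpow, conj_diag_apply_same]
    push_cast
    rfl
  have haval : ∀ i, a i = ∑ j, ν j ^ s * Complex.normSq (U i j) := by
    intro i
    show ((mpow ρ s) i i).re = _
    rw [hentry i, Complex.ofReal_re]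
  have haC : ∀ i, (mpow ρ s) i i = ((a i : ℝ) : ℂ) := by
    intro i
    rw [haval i, hentry i]
  have ha0 : ∀ i, 0 ≤ a i := by
    intro i
    rw [haval i]
    exact Finset.sum_nonneg fun j _ => mul_nonneg (Real.rpow_nonneg (hν0 j) _)
      (Complex.normSq_nonneg _)
  have hνtr : ∑ j, ν j = 1 := by
    have h1 : ρ.trace = ((∑ j, ν j : ℝ) : ℂ) := by
      rw [Matrix.trace]
      have h2 : ∀ i, ρ.diag i = (U * diagonal (fun i => ((ν i : ℝ) : ℂ)) * Uᴴ) i i := by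
        intro i; rw [Matrix.diag_apply, hspec]
      rw [Finset.sum_congr rfl fun i _ => h2 i, sum_conj_diag_apply_same U hU']
      push_cast
      rfl
    rw [htr] at h1
    exact_mod_cast h1.symm
  have hsuma : ∑ i, a i = ∑ j, ν j ^ s := by
    have h1 : ((∑ i, a i : ℝ) : ℂ) = ∑ i, (mpow ρ s) i i := by
      push_cast
      exact (Finset.sum_congr rfl fun i _ => (haC i).symm)
    have h2 : ∑ i, (mpow ρ s) i i = ((∑ j, ν j ^ s : ℝ) : ℂ) := by
      have h3 : ∀ i, (mpow ρ s) i i = (U * diagonal (fun i => ((ν i ^ s : ℝ) : ℂ)) * Uᴴ) i i := by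
        intro i; rw [hmpow]
      rw [Finset.sum_congr rfl fun i _ => h3 i, sum_conj_diag_apply_same U hU']
      push_cast
      rfl
    rw [h2] at h1
    exact_mod_cast h1
  have hsumapos : 0 < ∑ i, a i := by
    rw [hsuma]
    have hj : ∃ j, 0 < ν j := by
      by_contra hcon
      push_neg at hcon
      have : ∑ j, ν j ≤ 0 := Finset.sum_nonpos fun j _ => hcon j
      linarith
    obtain ⟨j0, hj0⟩ := hj
    exact Finset.sum_pos' (fun j _ => Real.rpow_nonneg (hν0 j) _)
      ⟨j0, Finset.mem_univ _, Real.rpow_pos_of_pos hj0 _⟩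
  have hex : ∃ i, 0 < a i := by
    by_contra hcon
    push_neg at hcon
    have : ∑ i, a i ≤ 0 := Finset.sum_nonpos fun i _ => hcon i
    linarith
  set T : ℝ := ∑ i, a i ^ (1 / s) with hTdef
  have hT : 0 < T := by
    obtain ⟨i0, hi0⟩ := hex
    exact Finset.sum_pos' (fun i _ => Real.rpow_nonneg (ha0 i) _)
      ⟨i0, Finset.mem_univ _, Real.rpow_pos_of_pos hi0 _⟩
  set F : ℝ := (s / (s - 1)) * Real.log T with hFdef
  have hlog : (1 / (s - 1)) * Real.log (T ^ s) = F := by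
    rw [Real.log_rpow hT, hFdef]
    ring
  -- value of petzD for the diagonal state built from q
  have hval : ∀ q : m → ℝ, petzD s ρ (diagonal (fun i => (q i : ℂ)))
      = (1 / (s - 1)) * Real.log (∑ i, a i * q i ^ (1 - s)) :=
    fun q => petzD_diag s ρ a q haC
  -- the optimizer
  have hqstar0 : ∀ i, 0 ≤ a i ^ (1 / s) / T := fun i =>
    div_nonneg (Real.rpow_nonneg (ha0 i) _) hT.le
  have hdstar : IsDensity (diagonal (fun i => ((a i ^ (1 / s) / T : ℝ) : ℂ)))
      ∧ IsIncoherent (diagonal (fun i => ((a i ^ (1 / s) / T : ℝ) : ℂ))) := by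
    refine ⟨⟨Matrix.posSemidef_diagonal_iff.mpr fun i => Complex.zero_le_real.mpr (hqstar0 i), ?_⟩,
      fun i j hij => Matrix.diagonal_apply_ne _ hij⟩
    rw [Matrix.trace_diagonal, ← Complex.ofReal_sum, ← Finset.sum_div, ← hTdef,
      div_self hT.ne', Complex.ofReal_one]
  have hvstar : petzD s ρ (diagonal (fun i => ((a i ^ (1 / s) / T : ℝ) : ℂ))) = F := by
    rw [hval, show ∑ i, a i * (a i ^ (1 / s) / T) ^ (1 - s) = T ^ s from
      holder_eq a ha0 hs0 hs1 (hTdef ▸ hT), hlog]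
  haveI hne : Nonempty {σ : Matrix m m ℂ // IsDensity σ ∧ IsIncoherent σ} :=
    ⟨⟨_, hdstar⟩⟩
  -- lower bound
  have hlower : ∀ σ : {σ : Matrix m m ℂ // IsDensity σ ∧ IsIncoherent σ},
      (if ∃ i, a i = 0 then min F 0 else F) ≤ petzD s ρ σ.1 := by
    rintro ⟨σ, hσ⟩
    obtain ⟨hdiag, hq0, hq1⟩ := incoherent_density_char σ hσ
    set q : m → ℝ := fun i => (σ i i).re with hqDef
    have hvq : petzD s ρ σ = (1 / (s - 1)) * Real.log (∑ i, a i * q i ^ (1 - s)) := by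
      conv_lhs => rw [hdiag]
      exact hval q
    have hG0 : 0 ≤ ∑ i, a i * q i ^ (1 - s) :=
      Finset.sum_nonneg fun i _ => mul_nonneg (ha0 i) (Real.rpow_nonneg (hq0 i) _)
    rcases eq_or_lt_of_le hG0 with h0 | hpos
    · rw [hvq, ← h0, Real.log_zero, mul_zero]
      split_ifs with h
      · exact min_le_right _ _
      · exfalso
        push_neg at h
        obtain ⟨i0, hqi0⟩ : ∃ i, 0 < q i := by
          by_contra hcon
          push_neg at hcon
          have : ∑ i, q i ≤ 0 := Finset.sum_nonpos fun i _ => hcon i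
          linarith
        have hpos' : 0 < ∑ i, a i * q i ^ (1 - s) :=
          Finset.sum_pos' (fun i _ => mul_nonneg (ha0 i) (Real.rpow_nonneg (hq0 i) _))
            ⟨i0, Finset.mem_univ _, mul_pos ((ha0 i0).lt_of_ne (Ne.symm (h i0)))
              (Real.rpow_pos_of_pos hqi0 _)⟩
        rw [← h0] at hpos'
        exact lt_irrefl _ hpos'
    · have hle : ∑ i, a i * q i ^ (1 - s) ≤ T ^ s :=
        holder_bound a q ha0 hq0 hq1 hs0 hs1 (hTdef ▸ hT)
      have hF : F ≤ petzD s ρ σ := by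
        rw [hvq, ← hlog]
        apply mul_le_mul_of_nonpos_left
          ((Real.log_le_log_iff hpos (Real.rpow_pos_of_pos hT s)).mpr hle)
        rw [one_div]
        exact inv_nonpos.mpr (by linarith)
      split_ifs with h
      · exact (min_le_left _ _).trans hF
      · exact hF
  have hBdd : BddBelow (Set.range fun σ : {σ : Matrix m m ℂ // IsDensity σ ∧ IsIncoherent σ}
      => petzD s ρ σ.1) := by
    refine ⟨if ∃ i, a i = 0 then min F 0 else F, ?_⟩
    rintro x ⟨σ, rfl⟩
    exact hlower σ
  rw [petzCoherence]
  have hgoal : (if ∃ i, ((mpow ρ s) i i).re = 0 then min F 0 else F)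
      = if ∃ i, a i = 0 then min F 0 else F := rfl
  apply le_antisymm
  · split_ifs with h
    · apply le_min
      · exact (ciInf_le hBdd ⟨_, hdstar⟩).trans_eq hvstar
      · obtain ⟨i0, hi0⟩ := h
        have hd0 : IsDensity (diagonal (fun i => (((Pi.single i0 1 : m → ℝ) i : ℝ) : ℂ)))
            ∧ IsIncoherent (diagonal (fun i => (((Pi.single i0 1 : m → ℝ) i : ℝ) : ℂ))) := by
          refine ⟨⟨Matrix.posSemidef_diagonal_iff.mpr fun i =>
            Complex.zero_le_real.mpr (by by_cases hii : i = i0 <;> simp [Pi.single_apply, hii]), ?_⟩,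
            fun i j hij => Matrix.diagonal_apply_ne _ hij⟩
          rw [Matrix.trace_diagonal]
          norm_cast
          simp [Finset.sum_pi_single']
        have hv0 : petzD s ρ (diagonal (fun i => (((Pi.single i0 1 : m → ℝ) i : ℝ) : ℂ))) = 0 := by
          rw [hval]
          have hzero : ∑ i, a i * ((Pi.single i0 1 : m → ℝ) i) ^ (1 - s) = 0 := by
            rw [Finset.sum_eq_single i0]
            · rw [show a i0 = 0 from hi0]
              simp
            · intro j _ hj
              rw [Pi.single_apply, if_neg hj, Real.zero_rpow (by linarith), mul_zero]
            · intro hmem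
              exact absurd (Finset.mem_univ i0) hmem
          rw [hzero, Real.log_zero, mul_zero]
        exact (ciInf_le hBdd ⟨_, hd0⟩).trans_eq hv0
    · exact (ciInf_le hBdd ⟨_, hdstar⟩).trans_eq hvstar
  · have := le_ciInf hlower
    split_ifs with h
    · rw [if_pos h] at this
      exact this
    · rw [if_neg h] at this
      exact this

end Aux


section Tensor
open Matrix
variable {d : ℕ}

lemma tpow_apply (A : Matrix (Fin d) (Fin d) ℂ) (k : ℕ) (x y : Fin k → Fin d) :
    tpow A k x y = ∏ i, A (x i) (y i) := rfl

lemma tpow_mulmat (A B : Matrix (Fin d) (Fin d) ℂ) (k : ℕ) :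
    tpow (A * B) k = tpow A k * tpow B k := by
  ext x y
  rw [Matrix.mul_apply, tpow_apply]
  simp_rw [Matrix.mul_apply, tpow_apply]
  rw [Finset.prod_univ_sum]
  rw [Fintype.piFinset_univ]
  exact Finset.sum_congr rfl fun z _ => Finset.prod_mul_distrib

lemma tpow_conjT (A : Matrix (Fin d) (Fin d) ℂ) (k : ℕ) :
    tpow Aᴴ k = (tpow A k)ᴴ := by
  ext x y
  rw [Matrix.conjTranspose_apply, tpow_apply, tpow_apply]
  simp_rw [Matrix.conjTranspose_apply]
  exact (map_prod (starRingEnd ℂ) (fun i => A (y i) (x i)) Finset.univ).symm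

lemma tpow_onemat (k : ℕ) : tpow (1 : Matrix (Fin d) (Fin d) ℂ) k = 1 := by
  ext x y
  rw [tpow_apply]
  by_cases h : x = y
  · subst h
    simp [Matrix.one_apply]
  · obtain ⟨i, hi⟩ := Function.ne_iff.mp h
    rw [Matrix.one_apply_ne h]
    exact Finset.prod_eq_zero (Finset.mem_univ i) (Matrix.one_apply_ne hi)

lemma tpow_diag (c : Fin d → ℂ) (k : ℕ) :
    tpow (diagonal c) k = diagonal (fun x : Fin k → Fin d => ∏ i, c (x i)) := by
  ext x y
  rw [tpow_apply]
  by_cases h : x = y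
  · subst h
    simp [Matrix.diagonal_apply_eq]
  · obtain ⟨i, hi⟩ := Function.ne_iff.mp h
    rw [Matrix.diagonal_apply_ne _ h]
    exact Finset.prod_eq_zero (Finset.mem_univ i) (Matrix.diagonal_apply_ne _ hi)

lemma tpow_trace (A : Matrix (Fin d) (Fin d) ℂ) (k : ℕ) :
    (tpow A k).trace = A.trace ^ k := by
  have h := Finset.prod_univ_sum (fun _ : Fin k => (Finset.univ : Finset (Fin d)))
    (fun _ j => A j j)
  rw [Fintype.piFinset_univ] at h
  rw [Matrix.trace, Matrix.trace]
  simp only [Matrix.diag_apply]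
  rw [show ∑ x : Fin k → Fin d, tpow A k x x = ∑ x : Fin k → Fin d, ∏ i, A (x i) (x i) from
    Finset.sum_congr rfl fun x _ => tpow_apply A k x x]
  rw [← h, Finset.prod_const, Finset.card_univ, Fintype.card_fin]

end Tensor

set_option maxHeartbeats 1000000 in
/-- Additivity of the Petz Rényi relative entropy of coherence:
`D_{s,C}(ρ^{⊗n}) = n · D_{s,C}(ρ)` for `s ∈ (0,1)`. -/
theorem petzCoherence_additive {d : ℕ} (k : ℕ) (ρ : Matrix (Fin d) (Fin d) ℂ)
    (hρ : IsDensity ρ) (s : ℝ) (hs : s ∈ Set.Ioo (0 : ℝ) 1) :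
    petzCoherence s (tpow ρ k) = (k : ℝ) * petzCoherence s ρ := by
  classical
  obtain ⟨hs0, hs1⟩ := hs
  obtain ⟨U, ν, hU, hU', hν0, hspec⟩ := posSemidef_decomp ρ hρ.1
  have hUk : tpow U k * (tpow U k).conjTranspose = 1 := by
    rw [← tpow_conjT, ← tpow_mulmat, hU, tpow_onemat]
  have hUk' : (tpow U k).conjTranspose * tpow U k = 1 := by
    rw [← tpow_conjT, ← tpow_mulmat, hU', tpow_onemat]
  have hspecK : tpow ρ k
      = tpow U k * Matrix.diagonal (fun x : Fin k → Fin d => ((∏ i, ν (x i) : ℝ) : ℂ))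
        * (tpow U k).conjTranspose := by
    rw [hspec, tpow_mulmat, tpow_mulmat, tpow_conjT, tpow_diag]
    congr 2
    funext x
    push_cast
    rfl
  have hdenK : IsDensity (tpow ρ k) := by
    constructor
    · rw [hspecK]
      apply Matrix.PosSemidef.mul_mul_conjTranspose_same
      exact Matrix.posSemidef_diagonal_iff.mpr fun x => Complex.zero_le_real.mpr
        (Finset.prod_nonneg fun i _ => hν0 (x i))
    · rw [tpow_trace, hρ.2, one_pow]
  have hmpowρ : mpow ρ s = U * Matrix.diagonal (fun i => ((ν i ^ s : ℝ) : ℂ)) * U.conjTranspose := by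
    rw [mpow, hspec]
    exact matFun_conj_diag U hU hU' ν _
  have hmpowK : mpow (tpow ρ k) s
      = tpow U k * Matrix.diagonal (fun x : Fin k → Fin d => (((∏ i, ν (x i)) ^ s : ℝ) : ℂ))
        * (tpow U k).conjTranspose := by
    rw [mpow, hspecK]
    exact matFun_conj_diag _ hUk hUk' _ _
  have htens : mpow (tpow ρ k) s = tpow (mpow ρ s) k := by
    rw [hmpowK, hmpowρ, tpow_mulmat, tpow_mulmat, tpow_conjT, tpow_diag]
    have hfun : (fun x : Fin k → Fin d => (((∏ i, ν (x i)) ^ s : ℝ) : ℂ))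
        = fun x => ∏ i, ((ν (x i) ^ s : ℝ) : ℂ) := by
      funext x
      rw [← Real.finset_prod_rpow _ _ (fun i _ => hν0 (x i)) s]
      push_cast
      rfl
    rw [hfun]
  -- real diagonal entries
  have haC : ∀ i, (mpow ρ s) i i = ((((mpow ρ s) i i).re : ℝ) : ℂ) := by
    intro i
    rw [hmpowρ, conj_diag_apply_same]
    rw [show ∑ j, ((ν j ^ s : ℝ) : ℂ) * (Complex.normSq (U i j) : ℂ)
        = ((∑ j, ν j ^ s * Complex.normSq (U i j) : ℝ) : ℂ) by push_cast; rfl]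
    rw [Complex.ofReal_re]
  have ha0 : ∀ i, 0 ≤ ((mpow ρ s) i i).re := by
    intro i
    rw [hmpowρ, conj_diag_apply_same]
    rw [show ∑ j, ((ν j ^ s : ℝ) : ℂ) * (Complex.normSq (U i j) : ℂ)
        = ((∑ j, ν j ^ s * Complex.normSq (U i j) : ℝ) : ℂ) by push_cast; rfl]
    rw [Complex.ofReal_re]
    exact Finset.sum_nonneg fun j _ => mul_nonneg (Real.rpow_nonneg (hν0 j) _)
      (Complex.normSq_nonneg _)
  have hArel : ∀ x : Fin k → Fin d,
      ((mpow (tpow ρ k) s) x x).re = ∏ i, ((mpow ρ s) (x i) (x i)).re := by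
    intro x
    rw [htens, tpow_apply, Finset.prod_congr rfl fun i _ => haC (x i),
      ← Complex.ofReal_prod, Complex.ofReal_re]
  have hTK : ∑ x : Fin k → Fin d, ((mpow (tpow ρ k) s) x x).re ^ (1 / s)
      = (∑ i, ((mpow ρ s) i i).re ^ (1 / s)) ^ k := by
    have h := Finset.prod_univ_sum (fun _ : Fin k => (Finset.univ : Finset (Fin d)))
      (fun _ j => ((mpow ρ s) j j).re ^ (1 / s))
    rw [Fintype.piFinset_univ] at h
    calc ∑ x : Fin k → Fin d, ((mpow (tpow ρ k) s) x x).re ^ (1 / s)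
        = ∑ x : Fin k → Fin d, ∏ i, ((mpow ρ s) (x i) (x i)).re ^ (1 / s) := by
          refine Finset.sum_congr rfl fun x _ => ?_
          rw [hArel x, Real.finset_prod_rpow _ _ (fun i _ => ha0 (x i)) _]
      _ = ∏ _i : Fin k, ∑ j, ((mpow ρ s) j j).re ^ (1 / s) := h.symm
      _ = (∑ j, ((mpow ρ s) j j).re ^ (1 / s)) ^ k := by
          rw [Finset.prod_const, Finset.card_univ, Fintype.card_fin]
  have hzero : (∃ x : Fin k → Fin d, ((mpow (tpow ρ k) s) x x).re = 0)
      ↔ (k ≠ 0 ∧ ∃ i, ((mpow ρ s) i i).re = 0) := by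
    constructor
    · rintro ⟨x, hx⟩
      rw [hArel x] at hx
      obtain ⟨i, _, hi⟩ := Finset.prod_eq_zero_iff.mp hx
      refine ⟨?_, x i, hi⟩
      rintro rfl
      exact i.elim0
    · rintro ⟨hk, i0, hi0⟩
      refine ⟨fun _ => i0, ?_⟩
      rw [hArel]
      rw [Finset.prod_const, Finset.card_univ, Fintype.card_fin, hi0, zero_pow hk]
  rw [petzCoherence_formula (tpow ρ k) hdenK hs0 hs1, petzCoherence_formula ρ hρ hs0 hs1]
  simp only [hzero, hTK, Real.log_pow]
  set L : ℝ := Real.log (∑ i, ((mpow ρ s) i i).re ^ (1 / s)) with hL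
  by_cases hz : ∃ i, ((mpow ρ s) i i).re = 0
  · by_cases hk : k = 0
    · subst hk
      rw [if_neg (by simp), if_pos hz]
      push_cast
      ring
    · rw [if_pos ⟨hk, hz⟩, if_pos hz]
      have hk0 : (0 : ℝ) ≤ (k : ℝ) := Nat.cast_nonneg k
      rcases le_total (s / (s - 1) * L) 0 with hF | hF
      · rw [min_eq_left hF, min_eq_left (by nlinarith [mul_nonpos_of_nonneg_of_nonpos hk0 hF] : s / (s - 1) * ((k : ℝ) * L) ≤ 0)]
        ring
      · rw [min_eq_right hF, min_eq_right (by nlinarith [mul_nonneg hk0 hF] : (0:ℝ) ≤ s / (s - 1) * ((k : ℝ) * L))]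
        ring
  · rw [if_neg (by tauto), if_neg hz]
    ring
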